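/- (Type D claim of Section 5.2: disubmodularity equals bisubmodularity of h) Let d ≥ 4. Let f be a real-valued function on signed subsets of [d] of size at most d−2 with f(∅) = 0, and let g be a real-valued function on signed subsets of [d] of size exactly d. Define h on all signed subsets of [d] by: h(X) = f(X) if |X| ≤ d−2; h(X) = g(Xa) + g(X(−a)) if |X| = d−1, where a is the unique element of [d] with a, −a ∉ X; and h(X) = 2g(X) if |X| = d. Then the pair (f,g) satisfies the local D_d-submodular inequalities — namely (i) f(Xa) + f(Xb) ≥ f(X) + f(Xab) for |X| ≤ d−4 and admissible {a,b} disjoint from ±X; (ii) f(Xa) + f(Xb) ≥ f(X) + g(Xabc) + g(Xab(−c)) for |X| = d−3 and admissible {a,b,c} disjoint from ±X; (iii) g(Xab) + g(X(−a)(−b)) ≥ f(X) for |X| = d−2 and admissible {a,b} disjoint from ±X — if and only if h is bisubmodular: h(X) + h(Y) ≥ h(X ⊓ Y) + h(X ⊔ Y) for all signed subsets X, Y of [d]. -/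
import Mathlib


/-- A signed subset of `[d]` is a pair `X = (X⁺, X⁻)` of disjoint subsets of `[d]`.
`adjS X a ε` adjoins the signed element `a` (with sign `ε`: `true` = positive,
`false` = negative) to the signed subset `X`. -/
def adjS {d : ℕ} (X : Finset (Fin d) × Finset (Fin d)) (a : Fin d) (ε : Bool) :
    Finset (Fin d) × Finset (Fin d) :=
  if ε then (insert a X.1, X.2) else (X.1, insert a X.2)

namespace DHelp
variable {d : ℕ}
abbrev SP (d : ℕ) := Finset (Fin d) × Finset (Fin d)

lemma card_adjS (X : SP d) (a : Fin d) (ε : Bool) (ha : a ∉ X.1 ∪ X.2) :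
    (adjS X a ε).1.card + (adjS X a ε).2.card = X.1.card + X.2.card + 1 := by
  simp only [Finset.mem_union, not_or] at ha
  cases ε <;> simp [adjS, Finset.card_insert_of_notMem, ha.1, ha.2] <;> omega

lemma disj_adjS {X : SP d} (hX : Disjoint X.1 X.2) {a : Fin d} (ha : a ∉ X.1 ∪ X.2)
    (ε : Bool) : Disjoint (adjS X a ε).1 (adjS X a ε).2 := by
  simp only [Finset.mem_union, not_or] at ha
  cases ε <;> simp [adjS, Finset.disjoint_insert_left, Finset.disjoint_insert_right,
    ha.1, ha.2, hX]

lemma free_adjS {X : SP d} {a b : Fin d} (hb : b ∉ X.1 ∪ X.2) (hba : b ≠ a) (ε : Bool) :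
    b ∉ (adjS X a ε).1 ∪ (adjS X a ε).2 := by
  simp only [Finset.mem_union, not_or] at hb
  cases ε <;> simp [adjS, Finset.mem_insert, hb.1, hb.2, hba]

lemma exists_free (s : Finset (Fin d)) (h : s.card < d) : ∃ a, a ∉ s := by
  by_contra hc
  push_neg at hc
  have : s = Finset.univ := Finset.eq_univ_iff_forall.2 hc
  rw [this] at h
  simp at h

lemma adjS_comm (X : SP d) (a b : Fin d) (εa εb : Bool) :
    adjS (adjS X a εa) b εb = adjS (adjS X b εb) a εa := by
  cases εa <;> cases εb <;> simp [adjS, Finset.insert_comm]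

lemma mem_adjS_self (X : SP d) (a : Fin d) (ε : Bool) :
    a ∈ (adjS X a ε).1 ∪ (adjS X a ε).2 := by
  cases ε <;> simp [adjS]

lemma adjS_superset {X : SP d} {x : Fin d} (hx : x ∈ X.1 ∪ X.2) (a : Fin d) (ε : Bool) :
    x ∈ (adjS X a ε).1 ∪ (adjS X a ε).2 := by
  rw [Finset.mem_union] at hx
  cases ε <;> rcases hx with hx | hx <;> simp [adjS, hx]

lemma meet_adj2 (X : SP d) {a b : Fin d} (ha : a ∉ X.1 ∪ X.2) (hb : b ∉ X.1 ∪ X.2)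
    (hab : a ≠ b) (εa εb : Bool) :
    ((adjS X a εa).1 ∩ (adjS X b εb).1, (adjS X a εa).2 ∩ (adjS X b εb).2) = X := by
  simp only [Finset.mem_union, not_or] at ha hb
  have hab' : ¬ (a = b) := hab
  cases εa <;> cases εb <;> apply Prod.ext <;> ext x <;>
    simp only [adjS, if_true, if_false, Bool.false_eq_true, ite_true, ite_false,
      Finset.mem_inter, Finset.mem_insert] <;>
    by_cases hxa : x = a <;> by_cases hxb : x = b <;> simp_all
lemma join_adj2 (X : SP d) (hX : Disjoint X.1 X.2) {a b : Fin d} (ha : a ∉ X.1 ∪ X.2)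
    (hb : b ∉ X.1 ∪ X.2) (hab : a ≠ b) (εa εb : Bool) :
    (((adjS X a εa).1 ∪ (adjS X b εb).1) \ ((adjS X a εa).2 ∪ (adjS X b εb).2),
      ((adjS X a εa).2 ∪ (adjS X b εb).2) \ ((adjS X a εa).1 ∪ (adjS X b εb).1))
      = adjS (adjS X a εa) b εb := by
  simp only [Finset.mem_union, not_or] at ha hb
  have hab' : ¬ (a = b) := hab
  have hd : ∀ x, x ∈ X.1 → x ∉ X.2 := fun x hx hx2 => (hX.forall_ne_finset hx hx2) rfl
  cases εa <;> cases εb <;> apply Prod.ext <;> ext x <;>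
    simp only [adjS, if_true, if_false, Bool.false_eq_true, ite_true, ite_false,
      Finset.mem_sdiff, Finset.mem_union, Finset.mem_insert] <;>
    by_cases hxa : x = a <;> by_cases hxb : x = b <;>
    by_cases hx1 : x ∈ X.1 <;> by_cases hx2 : x ∈ X.2 <;> simp_all

lemma meet_opp (X : SP d) {a b : Fin d} (ha : a ∉ X.1 ∪ X.2) (hb : b ∉ X.1 ∪ X.2)
    (hab : a ≠ b) (εa εb : Bool) :
    ((adjS (adjS X a εa) b εb).1 ∩ (adjS (adjS X a (!εa)) b (!εb)).1,
      (adjS (adjS X a εa) b εb).2 ∩ (adjS (adjS X a (!εa)) b (!εb)).2) = X := by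
  simp only [Finset.mem_union, not_or] at ha hb
  have hab' : ¬ (a = b) := hab
  cases εa <;> cases εb <;> apply Prod.ext <;> ext x <;>
    simp only [adjS, Bool.not_true, Bool.not_false, if_true, if_false, Bool.false_eq_true,
      ite_true, ite_false, Finset.mem_inter, Finset.mem_insert] <;>
    by_cases hxa : x = a <;> by_cases hxb : x = b <;> simp_all

lemma join_opp (X : SP d) (hX : Disjoint X.1 X.2) {a b : Fin d} (ha : a ∉ X.1 ∪ X.2)
    (hb : b ∉ X.1 ∪ X.2) (hab : a ≠ b) (εa εb : Bool) :
    (((adjS (adjS X a εa) b εb).1 ∪ (adjS (adjS X a (!εa)) b (!εb)).1) \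
        ((adjS (adjS X a εa) b εb).2 ∪ (adjS (adjS X a (!εa)) b (!εb)).2),
      ((adjS (adjS X a εa) b εb).2 ∪ (adjS (adjS X a (!εa)) b (!εb)).2) \
        ((adjS (adjS X a εa) b εb).1 ∪ (adjS (adjS X a (!εa)) b (!εb)).1)) = X := by
  simp only [Finset.mem_union, not_or] at ha hb
  have hab' : ¬ (a = b) := hab
  have hd : ∀ x, x ∈ X.1 → x ∉ X.2 := fun x hx hx2 => (hX.forall_ne_finset hx hx2) rfl
  cases εa <;> cases εb <;> apply Prod.ext <;> ext x <;>
    simp only [adjS, Bool.not_true, Bool.not_false, if_true, if_false, Bool.false_eq_true,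
      ite_true, ite_false, Finset.mem_sdiff, Finset.mem_union, Finset.mem_insert] <;>
    by_cases hxa : x = a <;> by_cases hxb : x = b <;>
    by_cases hx1 : x ∈ X.1 <;> by_cases hx2 : x ∈ X.2 <;> simp_all

lemma size_free1 {X : SP d} (hX : Disjoint X.1 X.2) {a : Fin d} (ha : a ∉ X.1 ∪ X.2) :
    X.1.card + X.2.card + 1 ≤ d := by
  have h1 : (insert a (X.1 ∪ X.2)).card ≤ d := by
    have := Finset.card_le_univ (insert a (X.1 ∪ X.2))
    simpa [Finset.card_univ] using this
  rw [Finset.card_insert_of_notMem ha, Finset.card_union_of_disjoint hX] at h1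
  omega

lemma size_free2 {X : SP d} (hX : Disjoint X.1 X.2) {a b : Fin d} (ha : a ∉ X.1 ∪ X.2)
    (hb : b ∉ X.1 ∪ X.2) (hab : a ≠ b) : X.1.card + X.2.card + 2 ≤ d := by
  have h1 : (insert a (insert b (X.1 ∪ X.2))).card ≤ d := by
    have := Finset.card_le_univ (insert a (insert b (X.1 ∪ X.2)))
    simpa [Finset.card_univ] using this
  have ha' : a ∉ insert b (X.1 ∪ X.2) := by simp [hab, Finset.mem_union.not.1 ha]
  rw [Finset.card_insert_of_notMem ha', Finset.card_insert_of_notMem hb,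
    Finset.card_union_of_disjoint hX] at h1
  omega

lemma exists_free_pair {X : SP d} (hX : Disjoint X.1 X.2)
    (hcard : X.1.card + X.2.card < d) : ∃ a, a ∉ X.1 ∪ X.2 := by
  apply exists_free
  rw [Finset.card_union_of_disjoint hX]
  exact hcard

lemma exists_free_avoid {X : SP d} (hX : Disjoint X.1 X.2) (a : Fin d)
    (hcard : X.1.card + X.2.card + 1 < d) : ∃ b, b ∉ X.1 ∪ X.2 ∧ b ≠ a := by
  obtain ⟨b, hb⟩ := exists_free (insert a (X.1 ∪ X.2)) (by
    calc (insert a (X.1 ∪ X.2)).card ≤ (X.1 ∪ X.2).card + 1 := Finset.card_insert_le _ _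
    _ ≤ X.1.card + X.2.card + 1 := by
        have := Finset.card_union_le X.1 X.2
        omega
    _ < d := hcard)
  simp only [Finset.mem_insert, not_or] at hb
  exact ⟨b, hb.2, hb.1⟩

section StepA
variable (h : SP d → ℝ)
variable (hL1 : ∀ X : SP d, Disjoint X.1 X.2 → ∀ a b : Fin d, ∀ εa εb : Bool,
    a ∉ X.1 ∪ X.2 → b ∉ X.1 ∪ X.2 → a ≠ b →
    h (adjS X a εa) + h (adjS X b εb) ≥ h X + h (adjS (adjS X a εa) b εb))

include hL1 in
lemma lemma1 : ∀ n : ℕ, ∀ Z W : SP d, Disjoint W.1 W.2 → Z.1 ⊆ W.1 → Z.2 ⊆ W.2 →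
    (W.1 \ Z.1).card + (W.2 \ Z.2).card = n →
    ∀ a : Fin d, a ∉ W.1 ∪ W.2 → ∀ ε : Bool,
    h W + h (adjS Z a ε) ≥ h Z + h (adjS W a ε) := by
  intro n
  induction n using Nat.strong_induction_on with
  | _ n IH =>
  intro Z W hW h1 h2 hn a ha ε
  rcases Nat.eq_zero_or_pos n with hn0 | hpos
  · subst hn0
    have e1 : W.1 \ Z.1 = ∅ := Finset.card_eq_zero.1 (by omega)
    have e2 : W.2 \ Z.2 = ∅ := Finset.card_eq_zero.1 (by omega)
    have : Z = W := by
      apply Prod.ext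
      · exact Finset.Subset.antisymm h1 (Finset.sdiff_eq_empty_iff_subset.1 e1)
      · exact Finset.Subset.antisymm h2 (Finset.sdiff_eq_empty_iff_subset.1 e2)
    subst this; linarith
  · have hZd : Disjoint Z.1 Z.2 := hW.mono h1 h2
    have haZ : a ∉ Z.1 ∪ Z.2 := by
      simp only [Finset.mem_union, not_or] at ha ⊢
      exact ⟨fun hx => ha.1 (h1 hx), fun hx => ha.2 (h2 hx)⟩
    have hne : ((W.1 \ Z.1) ∪ (W.2 \ Z.2)).Nonempty := by
      rcases (by omega : 0 < (W.1 \ Z.1).card ∨ 0 < (W.2 \ Z.2).card) with hc | hc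
      · obtain ⟨b, hb⟩ := Finset.card_pos.1 hc
        exact ⟨b, Finset.mem_union_left _ hb⟩
      · obtain ⟨b, hb⟩ := Finset.card_pos.1 hc
        exact ⟨b, Finset.mem_union_right _ hb⟩
    obtain ⟨b, hb⟩ := hne
    rw [Finset.mem_union] at hb
    rcases hb with hb | hb
    · -- b ∈ W.1 \ Z.1, σ = true
      have hbW : b ∈ W.1 := (Finset.mem_sdiff.1 hb).1
      have hbZ1 : b ∉ Z.1 := (Finset.mem_sdiff.1 hb).2
      have hbZ2 : b ∉ Z.2 := fun hx => (hW.forall_ne_finset hbW (h2 hx)) rfl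
      have hbZ : b ∉ Z.1 ∪ Z.2 := by simp [hbZ1, hbZ2]
      have hba : b ≠ a := by rintro rfl; simp [hbW] at ha
      set Z' := adjS Z b true with hZ'
      have hZ'1 : Z'.1 = insert b Z.1 := by simp [hZ', adjS]
      have hZ'2 : Z'.2 = Z.2 := by simp [hZ', adjS]
      have hsub1 : Z'.1 ⊆ W.1 := by rw [hZ'1]; exact Finset.insert_subset hbW h1
      have hmeas : (W.1 \ Z'.1).card + (W.2 \ Z'.2).card = n - 1 := by
        have : W.1 \ Z'.1 = (W.1 \ Z.1).erase b := by
          rw [hZ'1]; ext x; simp [Finset.mem_sdiff, Finset.mem_erase, Finset.mem_insert]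
          tauto
        have hcp : 0 < (W.1 \ Z.1).card := Finset.card_pos.2 ⟨b, hb⟩
        rw [this, hZ'2, Finset.card_erase_of_mem hb]
        omega
      have key := IH (n-1) (by omega) Z' W hW hsub1 (hZ'2 ▸ h2) hmeas a ha ε
      have loc := hL1 Z hZd b a true ε hbZ haZ hba
      have comm : adjS (adjS Z b true) a ε = adjS Z' a ε := rfl
      rw [comm] at loc
      linarith
    · -- b ∈ W.2 \ Z.2, σ = false
      have hbW : b ∈ W.2 := (Finset.mem_sdiff.1 hb).1
      have hbZ2 : b ∉ Z.2 := (Finset.mem_sdiff.1 hb).2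
      have hbZ1 : b ∉ Z.1 := fun hx => (hW.forall_ne_finset (h1 hx) hbW) rfl
      have hbZ : b ∉ Z.1 ∪ Z.2 := by simp [hbZ1, hbZ2]
      have hba : b ≠ a := by rintro rfl; simp [hbW] at ha
      set Z' := adjS Z b false with hZ'
      have hZ'1 : Z'.1 = Z.1 := by simp [hZ', adjS]
      have hZ'2 : Z'.2 = insert b Z.2 := by simp [hZ', adjS]
      have hsub2 : Z'.2 ⊆ W.2 := by rw [hZ'2]; exact Finset.insert_subset hbW h2
      have hmeas : (W.1 \ Z'.1).card + (W.2 \ Z'.2).card = n - 1 := by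
        have : W.2 \ Z'.2 = (W.2 \ Z.2).erase b := by
          rw [hZ'2]; ext x; simp [Finset.mem_sdiff, Finset.mem_erase, Finset.mem_insert]
          tauto
        have hcp : 0 < (W.2 \ Z.2).card := Finset.card_pos.2 ⟨b, hb⟩
        rw [this, hZ'1, Finset.card_erase_of_mem hb]
        omega
      have key := IH (n-1) (by omega) Z' W hW (hZ'1 ▸ h1) hsub2 hmeas a ha ε
      have loc := hL1 Z hZd b a false ε hbZ haZ hba
      have comm : adjS (adjS Z b false) a ε = adjS Z' a ε := rfl
      rw [comm] at loc
      linarith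

variable (hL2 : ∀ X : SP d, Disjoint X.1 X.2 → ∀ a : Fin d, a ∉ X.1 ∪ X.2 →
    h (adjS X a true) + h (adjS X a false) ≥ 2 * h X)

include hL1 hL2 in
lemma lemma2 : ∀ n : ℕ, ∀ Z W : SP d, Disjoint W.1 W.2 → Z.1 ⊆ W.1 → Z.2 ⊆ W.2 →
    (W.1 \ Z.1).card + (W.2 \ Z.2).card = n →
    ∀ a : Fin d, a ∉ W.1 ∪ W.2 → ∀ ε : Bool,
    h (adjS W a ε) + h (adjS Z a (!ε)) ≥ h W + h Z := by
  intro n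
  induction n using Nat.strong_induction_on with
  | _ n IH =>
  intro Z W hW h1 h2 hn a ha ε
  rcases Nat.eq_zero_or_pos n with hn0 | hpos
  · subst hn0
    have e1 : W.1 \ Z.1 = ∅ := Finset.card_eq_zero.1 (by omega)
    have e2 : W.2 \ Z.2 = ∅ := Finset.card_eq_zero.1 (by omega)
    have : Z = W := by
      apply Prod.ext
      · exact Finset.Subset.antisymm h1 (Finset.sdiff_eq_empty_iff_subset.1 e1)
      · exact Finset.Subset.antisymm h2 (Finset.sdiff_eq_empty_iff_subset.1 e2)
    subst this
    have := hL2 Z hW a ha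
    cases ε <;> simp only [Bool.not_false, Bool.not_true] <;> linarith
  · have hZd : Disjoint Z.1 Z.2 := hW.mono h1 h2
    have haZ : a ∉ Z.1 ∪ Z.2 := by
      simp only [Finset.mem_union, not_or] at ha ⊢
      exact ⟨fun hx => ha.1 (h1 hx), fun hx => ha.2 (h2 hx)⟩
    have hne : ((W.1 \ Z.1) ∪ (W.2 \ Z.2)).Nonempty := by
      rcases (by omega : 0 < (W.1 \ Z.1).card ∨ 0 < (W.2 \ Z.2).card) with hc | hc
      · obtain ⟨b, hb⟩ := Finset.card_pos.1 hc
        exact ⟨b, Finset.mem_union_left _ hb⟩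
      · obtain ⟨b, hb⟩ := Finset.card_pos.1 hc
        exact ⟨b, Finset.mem_union_right _ hb⟩
    obtain ⟨b, hb⟩ := hne
    rw [Finset.mem_union] at hb
    rcases hb with hb | hb
    · have hbW : b ∈ W.1 := (Finset.mem_sdiff.1 hb).1
      have hbZ1 : b ∉ Z.1 := (Finset.mem_sdiff.1 hb).2
      have hbZ2 : b ∉ Z.2 := fun hx => (hW.forall_ne_finset hbW (h2 hx)) rfl
      have hbZ : b ∉ Z.1 ∪ Z.2 := by simp [hbZ1, hbZ2]
      have hba : b ≠ a := by rintro rfl; simp [hbW] at ha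
      set Z' := adjS Z b true with hZ'
      have hZ'1 : Z'.1 = insert b Z.1 := by simp [hZ', adjS]
      have hZ'2 : Z'.2 = Z.2 := by simp [hZ', adjS]
      have hsub1 : Z'.1 ⊆ W.1 := by rw [hZ'1]; exact Finset.insert_subset hbW h1
      have hmeas : (W.1 \ Z'.1).card + (W.2 \ Z'.2).card = n - 1 := by
        have heq : W.1 \ Z'.1 = (W.1 \ Z.1).erase b := by
          rw [hZ'1]; ext x; simp [Finset.mem_sdiff, Finset.mem_erase, Finset.mem_insert]
          tauto
        have hcp : 0 < (W.1 \ Z.1).card := Finset.card_pos.2 ⟨b, hb⟩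
        rw [heq, hZ'2, Finset.card_erase_of_mem hb]
        omega
      have key := IH (n-1) (by omega) Z' W hW hsub1 (hZ'2 ▸ h2) hmeas a ha ε
      have loc := hL1 Z hZd b a true (!ε) hbZ haZ hba
      have comm : adjS (adjS Z b true) a (!ε) = adjS Z' a (!ε) := rfl
      rw [comm] at loc
      linarith
    · have hbW : b ∈ W.2 := (Finset.mem_sdiff.1 hb).1
      have hbZ2 : b ∉ Z.2 := (Finset.mem_sdiff.1 hb).2
      have hbZ1 : b ∉ Z.1 := fun hx => (hW.forall_ne_finset (h1 hx) hbW) rfl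
      have hbZ : b ∉ Z.1 ∪ Z.2 := by simp [hbZ1, hbZ2]
      have hba : b ≠ a := by rintro rfl; simp [hbW] at ha
      set Z' := adjS Z b false with hZ'
      have hZ'1 : Z'.1 = Z.1 := by simp [hZ', adjS]
      have hZ'2 : Z'.2 = insert b Z.2 := by simp [hZ', adjS]
      have hsub2 : Z'.2 ⊆ W.2 := by rw [hZ'2]; exact Finset.insert_subset hbW h2
      have hmeas : (W.1 \ Z'.1).card + (W.2 \ Z'.2).card = n - 1 := by
        have heq : W.2 \ Z'.2 = (W.2 \ Z.2).erase b := by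
          rw [hZ'2]; ext x; simp [Finset.mem_sdiff, Finset.mem_erase, Finset.mem_insert]
          tauto
        have hcp : 0 < (W.2 \ Z.2).card := Finset.card_pos.2 ⟨b, hb⟩
        rw [heq, hZ'1, Finset.card_erase_of_mem hb]
        omega
      have key := IH (n-1) (by omega) Z' W hW (hZ'1 ▸ h1) hsub2 hmeas a ha ε
      have loc := hL1 Z hZd b a false (!ε) hbZ haZ hba
      have comm : adjS (adjS Z b false) a (!ε) = adjS Z' a (!ε) := rfl
      rw [comm] at loc
      linarith

include hL1 hL2 in
lemma lemma2g : ∀ n : ℕ, ∀ A B : SP d, Disjoint A.1 A.2 → Disjoint B.1 B.2 →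
    Disjoint A.1 B.2 → Disjoint A.2 B.1 →
    (A.1 \ B.1).card + (A.2 \ B.2).card = n →
    ∀ i : Fin d, i ∉ A.1 ∪ A.2 → i ∉ B.1 ∪ B.2 → ∀ ε : Bool,
    h (adjS A i ε) + h (adjS B i (!ε)) ≥ h A + h B := by
  intro n
  induction n using Nat.strong_induction_on with
  | _ n IH =>
  intro A B hA hB hAB1 hAB2 hn i hiA hiB ε
  rcases Nat.eq_zero_or_pos n with hn0 | hpos
  · subst hn0
    have e1 : A.1 ⊆ B.1 := Finset.sdiff_eq_empty_iff_subset.1 (Finset.card_eq_zero.1 (by omega))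
    have e2 : A.2 ⊆ B.2 := Finset.sdiff_eq_empty_iff_subset.1 (Finset.card_eq_zero.1 (by omega))
    have hx := lemma2 h hL1 hL2 ((B.1 \ A.1).card + (B.2 \ A.2).card) A B hB e1 e2 rfl i hiB (!ε)
    simp only [Bool.not_not] at hx
    linarith
  · have hne : ((A.1 \ B.1) ∪ (A.2 \ B.2)).Nonempty := by
      rcases (by omega : 0 < (A.1 \ B.1).card ∨ 0 < (A.2 \ B.2).card) with hc | hc
      · obtain ⟨b, hb⟩ := Finset.card_pos.1 hc
        exact ⟨b, Finset.mem_union_left _ hb⟩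
      · obtain ⟨b, hb⟩ := Finset.card_pos.1 hc
        exact ⟨b, Finset.mem_union_right _ hb⟩
    obtain ⟨a, hb⟩ := hne
    rw [Finset.mem_union] at hb
    rcases hb with hb | hb
    · have haA : a ∈ A.1 := (Finset.mem_sdiff.1 hb).1
      have haB1 : a ∉ B.1 := (Finset.mem_sdiff.1 hb).2
      have haB2 : a ∉ B.2 := fun hx => (hAB1.forall_ne_finset haA hx) rfl
      have haB : a ∉ B.1 ∪ B.2 := by simp [haB1, haB2]
      have hai : a ≠ i := by rintro rfl; simp [haA] at hiA
      set B' := adjS B a true with hB'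
      have hB'1 : B'.1 = insert a B.1 := by simp [hB', adjS]
      have hB'2 : B'.2 = B.2 := by simp [hB', adjS]
      have hB'd : Disjoint B'.1 B'.2 := by
        rw [hB'1, hB'2, Finset.disjoint_insert_left]; exact ⟨haB2, hB⟩
      have hAB1' : Disjoint A.1 B'.2 := hB'2 ▸ hAB1
      have hAB2' : Disjoint A.2 B'.1 := by
        rw [hB'1, Finset.disjoint_insert_right]
        exact ⟨fun hx => (hA.forall_ne_finset haA hx) rfl, hAB2⟩
      have hiB' : i ∉ B'.1 ∪ B'.2 := free_adjS hiB (Ne.symm hai) true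
      have hmeas : (A.1 \ B'.1).card + (A.2 \ B'.2).card = n - 1 := by
        have heq : A.1 \ B'.1 = (A.1 \ B.1).erase a := by
          rw [hB'1]; ext x; simp [Finset.mem_sdiff, Finset.mem_erase, Finset.mem_insert]
          tauto
        have hcp : 0 < (A.1 \ B.1).card := Finset.card_pos.2 ⟨a, hb⟩
        rw [heq, hB'2, Finset.card_erase_of_mem hb]
        omega
      have key := IH (n-1) (by omega) A B' hA hB'd hAB1' hAB2' hmeas i hiA hiB' ε
      have loc := hL1 B hB a i true (!ε) haB hiB hai
      have comm : adjS (adjS B a true) i (!ε) = adjS B' i (!ε) := rfl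
      rw [comm] at loc
      linarith
    · have haA : a ∈ A.2 := (Finset.mem_sdiff.1 hb).1
      have haB2 : a ∉ B.2 := (Finset.mem_sdiff.1 hb).2
      have haB1 : a ∉ B.1 := fun hx => (hAB2.forall_ne_finset haA hx) rfl
      have haB : a ∉ B.1 ∪ B.2 := by simp [haB1, haB2]
      have hai : a ≠ i := by rintro rfl; simp [haA] at hiA
      set B' := adjS B a false with hB'
      have hB'1 : B'.1 = B.1 := by simp [hB', adjS]
      have hB'2 : B'.2 = insert a B.2 := by simp [hB', adjS]
      have hB'd : Disjoint B'.1 B'.2 := by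
        rw [hB'1, hB'2, Finset.disjoint_insert_right]; exact ⟨haB1, hB⟩
      have hAB2' : Disjoint A.2 B'.1 := hB'1 ▸ hAB2
      have hAB1' : Disjoint A.1 B'.2 := by
        rw [hB'2, Finset.disjoint_insert_right]
        exact ⟨fun hx => (hA.forall_ne_finset hx haA) rfl, hAB1⟩
      have hiB' : i ∉ B'.1 ∪ B'.2 := free_adjS hiB (Ne.symm hai) false
      have hmeas : (A.1 \ B'.1).card + (A.2 \ B'.2).card = n - 1 := by
        have heq : A.2 \ B'.2 = (A.2 \ B.2).erase a := by
          rw [hB'2]; ext x; simp [Finset.mem_sdiff, Finset.mem_erase, Finset.mem_insert]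
          tauto
        have hcp : 0 < (A.2 \ B.2).card := Finset.card_pos.2 ⟨a, hb⟩
        rw [heq, hB'1, Finset.card_erase_of_mem hb]
        omega
      have key := IH (n-1) (by omega) A B' hA hB'd hAB1' hAB2' hmeas i hiA hiB' ε
      have loc := hL1 B hB a i false (!ε) haB hiB hai
      have comm : adjS (adjS B a false) i (!ε) = adjS B' i (!ε) := rfl
      rw [comm] at loc
      linarith

include hL1 hL2 in
lemma bisub_of_local : ∀ n : ℕ, ∀ X Y : SP d, Disjoint X.1 X.2 → Disjoint Y.1 Y.2 →
    (Y.1 \ X.1).card + (Y.2 \ X.2).card = n →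
    h X + h Y ≥ h (X.1 ∩ Y.1, X.2 ∩ Y.2) +
      h ((X.1 ∪ Y.1) \ (X.2 ∪ Y.2), (X.2 ∪ Y.2) \ (X.1 ∪ Y.1)) := by
  intro n
  induction n using Nat.strong_induction_on with
  | _ n IH =>
  intro X Y hX hY hn
  by_cases hc1 : (X.2 ∩ Y.1).Nonempty
  · -- conflict with a ∈ X.2 ∩ Y.1
    obtain ⟨a, ha⟩ := hc1
    rw [Finset.mem_inter] at ha
    obtain ⟨haX2, haY1⟩ := ha
    have haX1 : a ∉ X.1 := fun hx => (hX.forall_ne_finset hx haX2) rfl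
    have haY2 : a ∉ Y.2 := fun hx => (hY.forall_ne_finset haY1 hx) rfl
    set Y₀ : SP d := (Y.1.erase a, Y.2) with hY₀
    have hY₀d : Disjoint Y₀.1 Y₀.2 := hY.mono (Finset.erase_subset a Y.1) le_rfl
    have haY₀ : a ∉ Y₀.1 ∪ Y₀.2 := by
      simp [hY₀, Finset.notMem_erase, haY2]
    have hYeq : adjS Y₀ a true = Y := by
      apply Prod.ext
      · simp [adjS, hY₀, Finset.insert_erase haY1]
      · simp [adjS, hY₀]
    have hMeq : X.1 ∩ Y₀.1 = X.1 ∩ Y.1 := by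
      ext x
      simp only [hY₀, Finset.mem_inter, Finset.mem_erase]
      constructor
      · rintro ⟨h1, _, h2⟩; exact ⟨h1, h2⟩
      · rintro ⟨h1, h2⟩; exact ⟨h1, fun he => haX1 (he ▸ h1), h2⟩
    set J : SP d := ((X.1 ∪ Y.1) \ (X.2 ∪ Y.2), (X.2 ∪ Y.2) \ (X.1 ∪ Y.1)) with hJ
    have hJd : Disjoint J.1 J.2 := disjoint_sdiff_sdiff
    have haJ : a ∉ J.1 ∪ J.2 := by
      rw [Finset.mem_union]
      rintro (hmem | hmem) <;> rw [Finset.mem_sdiff] at hmem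
      · exact hmem.2 (Finset.mem_union_left _ haX2)
      · exact hmem.2 (Finset.mem_union_right _ haY1)
    have hJeq1 : (X.1 ∪ Y₀.1) \ (X.2 ∪ Y₀.2) = J.1 := by
      ext x
      simp only [hY₀, hJ, Finset.mem_sdiff, Finset.mem_union, Finset.mem_erase]
      constructor
      · rintro ⟨h1 | ⟨_, h1⟩, h2⟩
        · exact ⟨Or.inl h1, h2⟩
        · exact ⟨Or.inr h1, h2⟩
      · rintro ⟨h1 | h1, h2⟩
        · exact ⟨Or.inl h1, h2⟩
        · refine ⟨Or.inr ⟨fun he => h2 ?_, h1⟩, h2⟩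
          subst he; exact Or.inl haX2
    have hJeq2 : (X.2 ∪ Y₀.2) \ (X.1 ∪ Y₀.1) = insert a J.2 := by
      ext x
      simp only [hY₀, hJ, Finset.mem_sdiff, Finset.mem_union, Finset.mem_erase,
        Finset.mem_insert]
      constructor
      · rintro ⟨h1, h2⟩
        by_cases hxa : x = a
        · exact Or.inl hxa
        · refine Or.inr ⟨h1, ?_⟩
          simp only [not_or] at h2 ⊢
          exact ⟨h2.1, fun hx => h2.2 ⟨hxa, hx⟩⟩
      · rintro (rfl | ⟨h1, h2⟩)
        · refine ⟨Or.inl haX2, ?_⟩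
          simp only [not_or]
          exact ⟨haX1, fun hx => hx.1 rfl⟩
        · refine ⟨h1, ?_⟩
          simp only [not_or] at h2 ⊢
          exact ⟨h2.1, fun hx => h2.2 hx.2⟩
    have hJ₀eq : ((X.1 ∪ Y₀.1) \ (X.2 ∪ Y₀.2), (X.2 ∪ Y₀.2) \ (X.1 ∪ Y₀.1))
        = adjS J a false := by
      apply Prod.ext
      · simpa [adjS] using hJeq1
      · simpa [adjS] using hJeq2
    have haYd : a ∈ Y.1 \ X.1 := Finset.mem_sdiff.2 ⟨haY1, haX1⟩
    have hmeas : (Y₀.1 \ X.1).card + (Y₀.2 \ X.2).card = n - 1 := by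
      have heq : Y₀.1 \ X.1 = (Y.1 \ X.1).erase a := by
        ext x
        simp only [hY₀, Finset.mem_sdiff, Finset.mem_erase]
        tauto
      have hcp : 0 < (Y.1 \ X.1).card := Finset.card_pos.2 ⟨a, haYd⟩
      rw [heq, Finset.card_erase_of_mem haYd]
      simp only [hY₀]
      omega
    have hnpos : 0 < n := by
      have hcp : 0 < (Y.1 \ X.1).card := Finset.card_pos.2 ⟨a, haYd⟩
      omega
    have key := IH (n-1) (by omega) X Y₀ hX hY₀d hmeas
    rw [hMeq, hJ₀eq] at key
    -- lemma2g : Y₀ ⊑ J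
    have hsq1 : Disjoint Y₀.1 J.2 := by
      have h0 : Disjoint J.2 (X.1 ∪ Y.1) := Finset.sdiff_disjoint
      have hss : Y₀.1 ⊆ X.1 ∪ Y.1 := (Finset.erase_subset a Y.1).trans Finset.subset_union_right
      exact (h0.mono_right hss).symm
    have hsq2 : Disjoint Y₀.2 J.1 := by
      have h0 : Disjoint J.1 (X.2 ∪ Y.2) := Finset.sdiff_disjoint
      have hss : Y₀.2 ⊆ X.2 ∪ Y.2 := Finset.subset_union_right
      exact (h0.mono_right hss).symm
    have key2 := lemma2g h hL1 hL2 _ Y₀ J hY₀d hJd hsq1 hsq2 rfl a haY₀ haJ true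
    simp only [Bool.not_true] at key2
    rw [hYeq] at key2
    linarith
  · by_cases hc2 : (X.1 ∩ Y.2).Nonempty
    · -- conflict with a ∈ X.1 ∩ Y.2
      obtain ⟨a, ha⟩ := hc2
      rw [Finset.mem_inter] at ha
      obtain ⟨haX1, haY2⟩ := ha
      have haX2 : a ∉ X.2 := fun hx => (hX.forall_ne_finset haX1 hx) rfl
      have haY1 : a ∉ Y.1 := fun hx => (hY.forall_ne_finset hx haY2) rfl
      set Y₀ : SP d := (Y.1, Y.2.erase a) with hY₀
      have hY₀d : Disjoint Y₀.1 Y₀.2 := hY.mono le_rfl (Finset.erase_subset a Y.2)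
      have haY₀ : a ∉ Y₀.1 ∪ Y₀.2 := by
        simp [hY₀, Finset.notMem_erase, haY1]
      have hYeq : adjS Y₀ a false = Y := by
        apply Prod.ext
        · simp [adjS, hY₀]
        · simp [adjS, hY₀, Finset.insert_erase haY2]
      have hMeq : X.2 ∩ Y₀.2 = X.2 ∩ Y.2 := by
        ext x
        simp only [hY₀, Finset.mem_inter, Finset.mem_erase]
        constructor
        · rintro ⟨h1, _, h2⟩; exact ⟨h1, h2⟩
        · rintro ⟨h1, h2⟩; exact ⟨h1, fun he => haX2 (he ▸ h1), h2⟩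
      set J : SP d := ((X.1 ∪ Y.1) \ (X.2 ∪ Y.2), (X.2 ∪ Y.2) \ (X.1 ∪ Y.1)) with hJ
      have hJd : Disjoint J.1 J.2 := disjoint_sdiff_sdiff
      have haJ : a ∉ J.1 ∪ J.2 := by
        rw [Finset.mem_union]
        rintro (hmem | hmem) <;> rw [Finset.mem_sdiff] at hmem
        · exact hmem.2 (Finset.mem_union_right _ haY2)
        · exact hmem.2 (Finset.mem_union_left _ haX1)
      have hJeq2 : (X.2 ∪ Y₀.2) \ (X.1 ∪ Y₀.1) = J.2 := by
        ext x
        simp only [hY₀, hJ, Finset.mem_sdiff, Finset.mem_union, Finset.mem_erase]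
        constructor
        · rintro ⟨h1 | ⟨_, h1⟩, h2⟩
          · exact ⟨Or.inl h1, h2⟩
          · exact ⟨Or.inr h1, h2⟩
        · rintro ⟨h1 | h1, h2⟩
          · exact ⟨Or.inl h1, h2⟩
          · refine ⟨Or.inr ⟨fun he => h2 ?_, h1⟩, h2⟩
            subst he; exact Or.inl haX1
      have hJeq1 : (X.1 ∪ Y₀.1) \ (X.2 ∪ Y₀.2) = insert a J.1 := by
        ext x
        simp only [hY₀, hJ, Finset.mem_sdiff, Finset.mem_union, Finset.mem_erase,
          Finset.mem_insert]
        constructor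
        · rintro ⟨h1, h2⟩
          by_cases hxa : x = a
          · exact Or.inl hxa
          · refine Or.inr ⟨h1, ?_⟩
            simp only [not_or] at h2 ⊢
            exact ⟨h2.1, fun hx => h2.2 ⟨hxa, hx⟩⟩
        · rintro (rfl | ⟨h1, h2⟩)
          · refine ⟨Or.inl haX1, ?_⟩
            simp only [not_or]
            exact ⟨haX2, fun hx => hx.1 rfl⟩
          · refine ⟨h1, ?_⟩
            simp only [not_or] at h2 ⊢
            exact ⟨h2.1, fun hx => h2.2 hx.2⟩
      have hJ₀eq : ((X.1 ∪ Y₀.1) \ (X.2 ∪ Y₀.2), (X.2 ∪ Y₀.2) \ (X.1 ∪ Y₀.1))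
          = adjS J a true := by
        apply Prod.ext
        · simpa [adjS] using hJeq1
        · simpa [adjS] using hJeq2
      have haYd : a ∈ Y.2 \ X.2 := Finset.mem_sdiff.2 ⟨haY2, haX2⟩
      have hmeas : (Y₀.1 \ X.1).card + (Y₀.2 \ X.2).card = n - 1 := by
        have heq : Y₀.2 \ X.2 = (Y.2 \ X.2).erase a := by
          ext x
          simp only [hY₀, Finset.mem_sdiff, Finset.mem_erase]
          tauto
        have hcp : 0 < (Y.2 \ X.2).card := Finset.card_pos.2 ⟨a, haYd⟩
        rw [heq, Finset.card_erase_of_mem haYd]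
        simp only [hY₀]
        omega
      have key := IH (n-1) (by
        have hcp : 0 < (Y.2 \ X.2).card := Finset.card_pos.2 ⟨a, haYd⟩
        omega) X Y₀ hX hY₀d hmeas
      rw [hMeq, hJ₀eq] at key
      have hsq1 : Disjoint Y₀.1 J.2 := by
        have h0 : Disjoint J.2 (X.1 ∪ Y.1) := Finset.sdiff_disjoint
        have hss : Y₀.1 ⊆ X.1 ∪ Y.1 := Finset.subset_union_right
        exact (h0.mono_right hss).symm
      have hsq2 : Disjoint Y₀.2 J.1 := by
        have h0 : Disjoint J.1 (X.2 ∪ Y.2) := Finset.sdiff_disjoint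
        have hss : Y₀.2 ⊆ X.2 ∪ Y.2 := (Finset.erase_subset a Y.2).trans Finset.subset_union_right
        exact (h0.mono_right hss).symm
      have key2 := lemma2g h hL1 hL2 _ Y₀ J hY₀d hJd hsq1 hsq2 rfl a haY₀ haJ false
      simp only [Bool.not_false] at key2
      rw [hYeq] at key2
      have hMeq1 : X.1 ∩ Y₀.1 = X.1 ∩ Y.1 := by simp [hY₀]
      rw [hMeq1] at key
      linarith
    · -- compatible case
      have hc1' : X.2 ∩ Y.1 = ∅ := Finset.not_nonempty_iff_eq_empty.1 hc1
      have hc2' : X.1 ∩ Y.2 = ∅ := Finset.not_nonempty_iff_eq_empty.1 hc2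
      have hcompat1 : ∀ x, x ∈ Y.1 → x ∉ X.2 := by
        intro x hx1 hx2
        have : x ∈ X.2 ∩ Y.1 := Finset.mem_inter.2 ⟨hx2, hx1⟩
        simp [hc1'] at this
      have hcompat2 : ∀ x, x ∈ Y.2 → x ∉ X.1 := by
        intro x hx1 hx2
        have : x ∈ X.1 ∩ Y.2 := Finset.mem_inter.2 ⟨hx2, hx1⟩
        simp [hc2'] at this
      rcases Nat.eq_zero_or_pos n with hn0 | hpos
      · -- base case: Y ⊆ X
        subst hn0
        have e1 : Y.1 ⊆ X.1 := Finset.sdiff_eq_empty_iff_subset.1 (Finset.card_eq_zero.1 (by omega))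
        have e2 : Y.2 ⊆ X.2 := Finset.sdiff_eq_empty_iff_subset.1 (Finset.card_eq_zero.1 (by omega))
        have hMe : (X.1 ∩ Y.1, X.2 ∩ Y.2) = Y := by
          apply Prod.ext
          · exact Finset.inter_eq_right.2 e1
          · exact Finset.inter_eq_right.2 e2
        have hJe : ((X.1 ∪ Y.1) \ (X.2 ∪ Y.2), (X.2 ∪ Y.2) \ (X.1 ∪ Y.1)) = X := by
          have u1 : X.1 ∪ Y.1 = X.1 := Finset.union_eq_left.2 e1
          have u2 : X.2 ∪ Y.2 = X.2 := Finset.union_eq_left.2 e2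
          apply Prod.ext
          · rw [u1, u2]; exact Finset.sdiff_eq_self_of_disjoint hX
          · rw [u1, u2]; exact Finset.sdiff_eq_self_of_disjoint hX.symm
        rw [hMe, hJe]
        linarith
      · obtain ⟨a, haYd⟩ : ∃ a, a ∈ (Y.1 \ X.1) ∪ (Y.2 \ X.2) := by
          rcases (by omega : 0 < (Y.1 \ X.1).card ∨ 0 < (Y.2 \ X.2).card) with hc | hc
          · obtain ⟨b, hb⟩ := Finset.card_pos.1 hc
            exact ⟨b, Finset.mem_union_left _ hb⟩
          · obtain ⟨b, hb⟩ := Finset.card_pos.1 hc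
            exact ⟨b, Finset.mem_union_right _ hb⟩
        rw [Finset.mem_union] at haYd
        rcases haYd with haYd | haYd
        · -- a ∈ Y.1 \ X.1
          have haY1 : a ∈ Y.1 := (Finset.mem_sdiff.1 haYd).1
          have haX1 : a ∉ X.1 := (Finset.mem_sdiff.1 haYd).2
          have haX2 : a ∉ X.2 := hcompat1 a haY1
          have haY2 : a ∉ Y.2 := fun hx => (hY.forall_ne_finset haY1 hx) rfl
          set Y₀ : SP d := (Y.1.erase a, Y.2) with hY₀
          have hY₀d : Disjoint Y₀.1 Y₀.2 := hY.mono (Finset.erase_subset a Y.1) le_rfl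
          have haY₀ : a ∉ Y₀.1 ∪ Y₀.2 := by
            simp [hY₀, Finset.notMem_erase, haY2]
          have hYeq : adjS Y₀ a true = Y := by
            apply Prod.ext
            · simp [adjS, hY₀, Finset.insert_erase haY1]
            · simp [adjS, hY₀]
          have hMeq : (X.1 ∩ Y₀.1, X.2 ∩ Y₀.2) = (X.1 ∩ Y.1, X.2 ∩ Y.2) := by
            apply Prod.ext
            · ext x
              simp only [hY₀, Finset.mem_inter, Finset.mem_erase]
              constructor
              · rintro ⟨h1, _, h2⟩; exact ⟨h1, h2⟩
              · rintro ⟨h1, h2⟩; exact ⟨h1, fun he => haX1 (he ▸ h1), h2⟩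
            · simp [hY₀]
          set J₀ : SP d := ((X.1 ∪ Y₀.1) \ (X.2 ∪ Y₀.2), (X.2 ∪ Y₀.2) \ (X.1 ∪ Y₀.1))
            with hJ₀
          have hJ₀d : Disjoint J₀.1 J₀.2 := disjoint_sdiff_sdiff
          have hsub1 : Y₀.1 ⊆ J₀.1 := by
            intro x hx
            have hxY1 : x ∈ Y.1 := Finset.erase_subset a Y.1 hx
            rw [hJ₀, Finset.mem_sdiff]
            refine ⟨Finset.mem_union_right _ hx, ?_⟩
            rw [Finset.mem_union]
            rintro (hc | hc)
            · exact hcompat1 x hxY1 hc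
            · exact (hY.forall_ne_finset hxY1 hc) rfl
          have hsub2 : Y₀.2 ⊆ J₀.2 := by
            intro x hx
            rw [hJ₀, Finset.mem_sdiff]
            refine ⟨Finset.mem_union_right _ hx, ?_⟩
            rw [Finset.mem_union]
            rintro (hc | hc)
            · exact hcompat2 x hx hc
            · exact (hY.forall_ne_finset (Finset.erase_subset a Y.1 hc) hx) rfl
          have haJ₀ : a ∉ J₀.1 ∪ J₀.2 := by
            rw [Finset.mem_union]
            rintro (hmem | hmem) <;> rw [hJ₀, Finset.mem_sdiff] at hmem
            · rcases Finset.mem_union.1 hmem.1 with hc | hc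
              · exact haX1 hc
              · exact Finset.notMem_erase a Y.1 hc
            · rcases Finset.mem_union.1 hmem.1 with hc | hc
              · exact haX2 hc
              · exact haY2 hc
          have hJeq : adjS J₀ a true = ((X.1 ∪ Y.1) \ (X.2 ∪ Y.2), (X.2 ∪ Y.2) \ (X.1 ∪ Y.1)) := by
            apply Prod.ext
            · show insert a ((X.1 ∪ Y₀.1) \ (X.2 ∪ Y₀.2)) = (X.1 ∪ Y.1) \ (X.2 ∪ Y.2)
              ext x
              simp only [hY₀, Finset.mem_insert, Finset.mem_sdiff, Finset.mem_union,
                Finset.mem_erase]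
              constructor
              · rintro (rfl | ⟨h1 | ⟨_, h1⟩, h2⟩)
                · exact ⟨Or.inr haY1, by simp [haX2, haY2]⟩
                · exact ⟨Or.inl h1, h2⟩
                · exact ⟨Or.inr h1, h2⟩
              · rintro ⟨h1 | h1, h2⟩
                · exact Or.inr ⟨Or.inl h1, h2⟩
                · by_cases hxa : x = a
                  · exact Or.inl hxa
                  · exact Or.inr ⟨Or.inr ⟨hxa, h1⟩, h2⟩
            · show (X.2 ∪ Y₀.2) \ (X.1 ∪ Y₀.1) = (X.2 ∪ Y.2) \ (X.1 ∪ Y.1)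
              ext x
              simp only [hY₀, Finset.mem_sdiff, Finset.mem_union, Finset.mem_erase]
              constructor
              · rintro ⟨h1, h2⟩
                refine ⟨h1, ?_⟩
                rw [not_or] at h2 ⊢
                refine ⟨h2.1, fun hc => ?_⟩
                have hxa : x ≠ a := by
                  rintro rfl
                  rcases h1 with h1 | h1
                  · exact haX2 h1
                  · exact haY2 h1
                exact h2.2 ⟨hxa, hc⟩
              · rintro ⟨h1, h2⟩
                refine ⟨h1, ?_⟩
                rw [not_or] at h2 ⊢
                exact ⟨h2.1, fun hc => h2.2 hc.2⟩
          have hmeas : (Y₀.1 \ X.1).card + (Y₀.2 \ X.2).card = n - 1 := by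
            have heq : Y₀.1 \ X.1 = (Y.1 \ X.1).erase a := by
              ext x
              simp only [hY₀, Finset.mem_sdiff, Finset.mem_erase]
              tauto
            have hcp : 0 < (Y.1 \ X.1).card := Finset.card_pos.2 ⟨a, haYd⟩
            rw [heq, Finset.card_erase_of_mem haYd]
            simp only [hY₀]
            omega
          have key := IH (n-1) (by omega) X Y₀ hX hY₀d hmeas
          rw [hMeq, ← hJ₀] at key
          have key2 := lemma1 h hL1 ((J₀.1 \ Y₀.1).card + (J₀.2 \ Y₀.2).card) Y₀ J₀ hJ₀d
            hsub1 hsub2 rfl a haJ₀ true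
          rw [hYeq, hJeq] at key2
          linarith
        · -- a ∈ Y.2 \ X.2
          have haY2 : a ∈ Y.2 := (Finset.mem_sdiff.1 haYd).1
          have haX2 : a ∉ X.2 := (Finset.mem_sdiff.1 haYd).2
          have haX1 : a ∉ X.1 := hcompat2 a haY2
          have haY1 : a ∉ Y.1 := fun hx => (hY.forall_ne_finset hx haY2) rfl
          set Y₀ : SP d := (Y.1, Y.2.erase a) with hY₀
          have hY₀d : Disjoint Y₀.1 Y₀.2 := hY.mono le_rfl (Finset.erase_subset a Y.2)
          have haY₀ : a ∉ Y₀.1 ∪ Y₀.2 := by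
            simp [hY₀, Finset.notMem_erase, haY1]
          have hYeq : adjS Y₀ a false = Y := by
            apply Prod.ext
            · simp [adjS, hY₀]
            · simp [adjS, hY₀, Finset.insert_erase haY2]
          have hMeq : (X.1 ∩ Y₀.1, X.2 ∩ Y₀.2) = (X.1 ∩ Y.1, X.2 ∩ Y.2) := by
            apply Prod.ext
            · simp [hY₀]
            · ext x
              simp only [hY₀, Finset.mem_inter, Finset.mem_erase]
              constructor
              · rintro ⟨h1, _, h2⟩; exact ⟨h1, h2⟩
              · rintro ⟨h1, h2⟩; exact ⟨h1, fun he => haX2 (he ▸ h1), h2⟩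
          set J₀ : SP d := ((X.1 ∪ Y₀.1) \ (X.2 ∪ Y₀.2), (X.2 ∪ Y₀.2) \ (X.1 ∪ Y₀.1))
            with hJ₀
          have hJ₀d : Disjoint J₀.1 J₀.2 := disjoint_sdiff_sdiff
          have hsub1 : Y₀.1 ⊆ J₀.1 := by
            intro x hx
            rw [hJ₀, Finset.mem_sdiff]
            refine ⟨Finset.mem_union_right _ hx, ?_⟩
            rw [Finset.mem_union]
            rintro (hc | hc)
            · exact hcompat1 x hx hc
            · exact (hY.forall_ne_finset hx (Finset.erase_subset a Y.2 hc)) rfl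
          have hsub2 : Y₀.2 ⊆ J₀.2 := by
            intro x hx
            have hxY2 : x ∈ Y.2 := Finset.erase_subset a Y.2 hx
            rw [hJ₀, Finset.mem_sdiff]
            refine ⟨Finset.mem_union_right _ hx, ?_⟩
            rw [Finset.mem_union]
            rintro (hc | hc)
            · exact hcompat2 x hxY2 hc
            · exact (hY.forall_ne_finset hc hxY2) rfl
          have haJ₀ : a ∉ J₀.1 ∪ J₀.2 := by
            rw [Finset.mem_union]
            rintro (hmem | hmem) <;> rw [hJ₀, Finset.mem_sdiff] at hmem
            · rcases Finset.mem_union.1 hmem.1 with hc | hc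
              · exact haX1 hc
              · exact haY1 hc
            · rcases Finset.mem_union.1 hmem.1 with hc | hc
              · exact haX2 hc
              · exact Finset.notMem_erase a Y.2 hc
          have hJeq : adjS J₀ a false = ((X.1 ∪ Y.1) \ (X.2 ∪ Y.2), (X.2 ∪ Y.2) \ (X.1 ∪ Y.1)) := by
            apply Prod.ext
            · show (X.1 ∪ Y₀.1) \ (X.2 ∪ Y₀.2) = (X.1 ∪ Y.1) \ (X.2 ∪ Y.2)
              ext x
              simp only [hY₀, Finset.mem_sdiff, Finset.mem_union, Finset.mem_erase]
              constructor
              · rintro ⟨h1, h2⟩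
                refine ⟨h1, ?_⟩
                rw [not_or] at h2 ⊢
                refine ⟨h2.1, fun hc => ?_⟩
                have hxa : x ≠ a := by
                  rintro rfl
                  rcases h1 with h1 | h1
                  · exact haX1 h1
                  · exact haY1 h1
                exact h2.2 ⟨hxa, hc⟩
              · rintro ⟨h1, h2⟩
                refine ⟨h1, ?_⟩
                rw [not_or] at h2 ⊢
                exact ⟨h2.1, fun hc => h2.2 hc.2⟩
            · show insert a ((X.2 ∪ Y₀.2) \ (X.1 ∪ Y₀.1)) = (X.2 ∪ Y.2) \ (X.1 ∪ Y.1)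
              ext x
              simp only [hY₀, Finset.mem_insert, Finset.mem_sdiff, Finset.mem_union,
                Finset.mem_erase]
              constructor
              · rintro (rfl | ⟨h1 | ⟨_, h1⟩, h2⟩)
                · exact ⟨Or.inr haY2, by simp [haX1, haY1]⟩
                · exact ⟨Or.inl h1, h2⟩
                · exact ⟨Or.inr h1, h2⟩
              · rintro ⟨h1 | h1, h2⟩
                · exact Or.inr ⟨Or.inl h1, h2⟩
                · by_cases hxa : x = a
                  · exact Or.inl hxa
                  · exact Or.inr ⟨Or.inr ⟨hxa, h1⟩, h2⟩
          have hmeas : (Y₀.1 \ X.1).card + (Y₀.2 \ X.2).card = n - 1 := by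
            have heq : Y₀.2 \ X.2 = (Y.2 \ X.2).erase a := by
              ext x
              simp only [hY₀, Finset.mem_sdiff, Finset.mem_erase]
              tauto
            have hcp : 0 < (Y.2 \ X.2).card := Finset.card_pos.2 ⟨a, haYd⟩
            rw [heq, Finset.card_erase_of_mem haYd]
            simp only [hY₀]
            omega
          have key := IH (n-1) (by omega) X Y₀ hX hY₀d hmeas
          rw [hMeq, ← hJ₀] at key
          have key2 := lemma1 h hL1 ((J₀.1 \ Y₀.1).card + (J₀.2 \ Y₀.2).card) Y₀ J₀ hJ₀d
            hsub1 hsub2 rfl a haJ₀ false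
          rw [hYeq, hJeq] at key2
          linarith

end StepA
end DHelp

/-- **Type D claim of Section 5.2 (disubmodularity equals bisubmodularity of `h`)**: with `f`
defined on signed subsets of size `≤ d−2` (with `f(∅) = 0`), `g` defined on signed subsets of
size `d`, and `h` the induced function on all signed subsets (`h = f` on sizes `≤ d−2`;
`h(X) = g(Xa) + g(X(−a))` for `|X| = d−1` with `a` the missing index; `h = 2g` on size `d`),
the pair `(f, g)` satisfies the local `D_d`-submodular inequalities if and only if `h` is
bisubmodular. -/
theorem disubmodular_iff_bisubmodular
    (d : ℕ) (hd : 4 ≤ d)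
    (f g h : Finset (Fin d) × Finset (Fin d) → ℝ)
    (hf0 : f (∅, ∅) = 0)
    (hle : ∀ X : Finset (Fin d) × Finset (Fin d), Disjoint X.1 X.2 →
      (X.1.card + X.2.card : ℤ) ≤ (d : ℤ) - 2 → h X = f X)
    (hmid : ∀ X : Finset (Fin d) × Finset (Fin d), Disjoint X.1 X.2 →
      X.1.card + X.2.card = d - 1 → ∀ a : Fin d, a ∉ X.1 ∪ X.2 →
        h X = g (adjS X a true) + g (adjS X a false))
    (htop : ∀ X : Finset (Fin d) × Finset (Fin d), Disjoint X.1 X.2 →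
      X.1.card + X.2.card = d → h X = 2 * g X) :
    ((∀ X : Finset (Fin d) × Finset (Fin d), Disjoint X.1 X.2 →
        (X.1.card + X.2.card : ℤ) ≤ (d : ℤ) - 4 →
        ∀ a b : Fin d, ∀ εa εb : Bool, a ∉ X.1 ∪ X.2 → b ∉ X.1 ∪ X.2 → a ≠ b →
          f (adjS X a εa) + f (adjS X b εb) ≥ f X + f (adjS (adjS X a εa) b εb)) ∧
      (∀ X : Finset (Fin d) × Finset (Fin d), Disjoint X.1 X.2 →
        X.1.card + X.2.card = d - 3 →
        ∀ a b c : Fin d, ∀ εa εb εc : Bool,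
          a ∉ X.1 ∪ X.2 → b ∉ X.1 ∪ X.2 → c ∉ X.1 ∪ X.2 →
          a ≠ b → a ≠ c → b ≠ c →
          f (adjS X a εa) + f (adjS X b εb) ≥ f X +
            g (adjS (adjS (adjS X a εa) b εb) c εc) +
            g (adjS (adjS (adjS X a εa) b εb) c (!εc))) ∧
      (∀ X : Finset (Fin d) × Finset (Fin d), Disjoint X.1 X.2 →
        X.1.card + X.2.card = d - 2 →
        ∀ a b : Fin d, ∀ εa εb : Bool, a ∉ X.1 ∪ X.2 → b ∉ X.1 ∪ X.2 → a ≠ b →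
          g (adjS (adjS X a εa) b εb) + g (adjS (adjS X a (!εa)) b (!εb)) ≥ f X)) ↔
    (∀ X Y : Finset (Fin d) × Finset (Fin d), Disjoint X.1 X.2 → Disjoint Y.1 Y.2 →
      h X + h Y ≥ h (X.1 ∩ Y.1, X.2 ∩ Y.2) +
        h ((X.1 ∪ Y.1) \ (X.2 ∪ Y.2), (X.2 ∪ Y.2) \ (X.1 ∪ Y.1))) := by
  constructor
  · rintro ⟨I1, I2, I3⟩
    -- local inequality L1 for h
    have hL1 : ∀ X : Finset (Fin d) × Finset (Fin d), Disjoint X.1 X.2 →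
        ∀ a b : Fin d, ∀ εa εb : Bool, a ∉ X.1 ∪ X.2 → b ∉ X.1 ∪ X.2 → a ≠ b →
        h (adjS X a εa) + h (adjS X b εb) ≥ h X + h (adjS (adjS X a εa) b εb) := by
      intro X hX a b εa εb ha hb hab
      have hs2 := DHelp.size_free2 hX ha hb hab
      have hXa := DHelp.disj_adjS hX ha εa
      have hXb := DHelp.disj_adjS hX hb εb
      have hbfa : b ∉ (adjS X a εa).1 ∪ (adjS X a εa).2 := DHelp.free_adjS hb (Ne.symm hab) εa
      have hXab := DHelp.disj_adjS hXa hbfa εb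
      have hcXa := DHelp.card_adjS X a εa ha
      have hcXb := DHelp.card_adjS X b εb hb
      have hcXab := DHelp.card_adjS _ b εb hbfa
      by_cases h4 : X.1.card + X.2.card + 4 ≤ d
      · rw [hle X hX (by push_cast; omega), hle _ hXa (by push_cast; omega),
          hle _ hXb (by push_cast; omega), hle _ hXab (by push_cast; omega)]
        exact I1 X hX (by push_cast; omega) a b εa εb ha hb hab
      · by_cases h3 : X.1.card + X.2.card + 3 = d
        · obtain ⟨c, hc⟩ := DHelp.exists_free_pair hXab (by omega)
          have hcX : c ∉ X.1 ∪ X.2 := fun hx =>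
            hc (DHelp.adjS_superset (DHelp.adjS_superset hx a εa) b εb)
          have hca : a ≠ c := by
            rintro rfl
            exact hc (DHelp.adjS_superset (DHelp.mem_adjS_self X a εa) b εb)
          have hcb : b ≠ c := by
            rintro rfl
            exact hc (DHelp.mem_adjS_self _ b εb)
          have hmidv := hmid _ hXab (by omega) c hc
          rw [hle X hX (by push_cast; omega), hle _ hXa (by push_cast; omega),
            hle _ hXb (by push_cast; omega), hmidv]
          have i2 := I2 X hX (by omega) a b c εa εb true ha hb hcX hab hca hcb
          simp only [Bool.not_true] at i2
          linarith
        · have h2 : X.1.card + X.2.card + 2 = d := by omega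
          have hmva := hmid _ hXa (by omega) b hbfa
          have hafb : a ∉ (adjS X b εb).1 ∪ (adjS X b εb).2 := DHelp.free_adjS ha hab εb
          have hmvb := hmid _ hXb (by omega) a hafb
          have htv := htop _ hXab (by omega)
          rw [DHelp.adjS_comm X b a εb true, DHelp.adjS_comm X b a εb false] at hmvb
          have i3 := I3 X hX (by omega) a b εa (!εb) ha hb hab
          simp only [Bool.not_not] at i3
          rw [hle X hX (by push_cast; omega), hmva, hmvb, htv]
          cases εa <;> cases εb <;>
            simp only [Bool.not_true, Bool.not_false] at i3 ⊢ <;> linarith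
    -- auxiliary f-inequality for sizes ≤ d-3
    have auxf : ∀ k : ℕ, ∀ X : Finset (Fin d) × Finset (Fin d), Disjoint X.1 X.2 →
        ∀ a : Fin d, a ∉ X.1 ∪ X.2 → X.1.card + X.2.card + 3 + k = d →
        f (adjS X a true) + f (adjS X a false) ≥ 2 * f X := by
      intro k
      induction k with
      | zero =>
        intro X hX a ha h3
        obtain ⟨b, hb, hba⟩ := DHelp.exists_free_avoid hX a (by omega)
        obtain ⟨c, hc, hcb'⟩ := DHelp.exists_free_avoid
          (DHelp.disj_adjS hX hb true) a
          (by have := DHelp.card_adjS X b true hb; omega)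
        have hcX : c ∉ X.1 ∪ X.2 := fun hx => hc (DHelp.adjS_superset hx b true)
        have hcb : c ≠ b := by rintro rfl; exact hc (DHelp.mem_adjS_self X _ true)
        have hab : a ≠ b := Ne.symm hba
        have hac : a ≠ c := Ne.symm hcb'
        have hbc : b ≠ c := Ne.symm hcb
        have A := I2 X hX (by omega) a b c true true true ha hb hcX hab hac hbc
        have B := I2 X hX (by omega) a b c false true true ha hb hcX hab hac hbc
        have hXb := DHelp.disj_adjS hX hb true
        have hcardXb := DHelp.card_adjS X b true hb
        have hafb : a ∉ (adjS X b true).1 ∪ (adjS X b true).2 :=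
          DHelp.free_adjS ha hab true
        have hcfb : c ∉ (adjS X b true).1 ∪ (adjS X b true).2 := hc
        have C := I3 (adjS X b true) hXb (by omega) a c true false hafb hcfb hac
        have D := I3 (adjS X b true) hXb (by omega) a c true true hafb hcfb hac
        simp only [Bool.not_true, Bool.not_false] at A B C D
        rw [DHelp.adjS_comm X b a true true, DHelp.adjS_comm X b a true false] at C D
        linarith
      | succ k IH =>
        intro X hX a ha hs
        obtain ⟨b, hb, hba⟩ := DHelp.exists_free_avoid hX a (by omega)
        have hab : a ≠ b := Ne.symm hba
        have p1 := I1 X hX (by push_cast; omega) a b true true ha hb hab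
        have p2 := I1 X hX (by push_cast; omega) a b false true ha hb hab
        have hXb := DHelp.disj_adjS hX hb true
        have hcb := DHelp.card_adjS X b true hb
        have hafb : a ∉ (adjS X b true).1 ∪ (adjS X b true).2 :=
          DHelp.free_adjS ha hab true
        have IHb := IH (adjS X b true) hXb a hafb (by omega)
        rw [DHelp.adjS_comm X b a true true, DHelp.adjS_comm X b a true false] at IHb
        have e1 : adjS (adjS X a true) b true = adjS (adjS X a true) b true := rfl
        linarith
    -- local inequality L2 for h
    have hL2 : ∀ X : Finset (Fin d) × Finset (Fin d), Disjoint X.1 X.2 →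
        ∀ a : Fin d, a ∉ X.1 ∪ X.2 →
        h (adjS X a true) + h (adjS X a false) ≥ 2 * h X := by
      intro X hX a ha
      have hs1 := DHelp.size_free1 hX ha
      have hcaT := DHelp.card_adjS X a true ha
      have hcaF := DHelp.card_adjS X a false ha
      have hXaT := DHelp.disj_adjS hX ha true
      have hXaF := DHelp.disj_adjS hX ha false
      by_cases h1 : X.1.card + X.2.card + 1 = d
      · rw [htop _ hXaT (by omega), htop _ hXaF (by omega), hmid X hX (by omega) a ha]
        linarith
      · by_cases h2 : X.1.card + X.2.card + 2 = d
        · obtain ⟨b, hb, hba⟩ := DHelp.exists_free_avoid hX a (by omega)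
          have hab : a ≠ b := Ne.symm hba
          have hbfaT : b ∉ (adjS X a true).1 ∪ (adjS X a true).2 :=
            DHelp.free_adjS hb hba true
          have hbfaF : b ∉ (adjS X a false).1 ∪ (adjS X a false).2 :=
            DHelp.free_adjS hb hba false
          have ma := hmid _ hXaT (by omega) b hbfaT
          have mb := hmid _ hXaF (by omega) b hbfaF
          have i1 := I3 X hX (by omega) a b true true ha hb hab
          have i2 := I3 X hX (by omega) a b true false ha hb hab
          simp only [Bool.not_true, Bool.not_false] at i1 i2
          rw [hle X hX (by push_cast; omega), ma, mb]
          linarith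
        · have hk : X.1.card + X.2.card + 3 + (d - 3 - (X.1.card + X.2.card)) = d := by
            omega
          have key := auxf _ X hX a ha hk
          rw [hle X hX (by push_cast; omega), hle _ hXaT (by push_cast; omega),
            hle _ hXaF (by push_cast; omega)]
          linarith
    intro X Y hX hY
    exact DHelp.bisub_of_local h hL1 hL2 _ X Y hX hY rfl
  · intro hbi
    refine ⟨?_, ?_, ?_⟩
    · intro X hX hs a b εa εb ha hb hab
      have hXa := DHelp.disj_adjS hX ha εa
      have hXb := DHelp.disj_adjS hX hb εb
      have hbfa : b ∉ (adjS X a εa).1 ∪ (adjS X a εa).2 := DHelp.free_adjS hb (Ne.symm hab) εa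
      have hXab := DHelp.disj_adjS hXa hbfa εb
      have c0 := DHelp.card_adjS X a εa ha
      have c1 := DHelp.card_adjS X b εb hb
      have c2 := DHelp.card_adjS _ b εb hbfa
      have key := hbi (adjS X a εa) (adjS X b εb) hXa hXb
      rw [DHelp.meet_adj2 X ha hb hab εa εb, DHelp.join_adj2 X hX ha hb hab εa εb] at key
      rw [hle _ hXa (by push_cast; omega), hle _ hXb (by push_cast; omega),
        hle X hX (by push_cast; omega), hle _ hXab (by push_cast; omega)] at key
      exact key
    · intro X hX hs a b c εa εb εc ha hb hc hab hac hbc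
      have hXa := DHelp.disj_adjS hX ha εa
      have hXb := DHelp.disj_adjS hX hb εb
      have hbfa : b ∉ (adjS X a εa).1 ∪ (adjS X a εa).2 := DHelp.free_adjS hb (Ne.symm hab) εa
      have hXab := DHelp.disj_adjS hXa hbfa εb
      have hcfab : c ∉ (adjS (adjS X a εa) b εb).1 ∪ (adjS (adjS X a εa) b εb).2 :=
        DHelp.free_adjS (DHelp.free_adjS hc (Ne.symm hac) εa) (Ne.symm hbc) εb
      have c0 := DHelp.card_adjS X a εa ha
      have c1 := DHelp.card_adjS X b εb hb
      have c2 := DHelp.card_adjS _ b εb hbfa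
      have key := hbi (adjS X a εa) (adjS X b εb) hXa hXb
      rw [DHelp.meet_adj2 X ha hb hab εa εb, DHelp.join_adj2 X hX ha hb hab εa εb] at key
      rw [hle _ hXa (by push_cast; omega), hle _ hXb (by push_cast; omega),
        hle X hX (by push_cast; omega), hmid _ hXab (by omega) c hcfab] at key
      cases εc <;> simp only [Bool.not_true, Bool.not_false] <;> linarith
    · intro X hX hs a b εa εb ha hb hab
      have hXa := DHelp.disj_adjS hX ha εa
      have hXa' := DHelp.disj_adjS hX ha (!εa)
      have hbfa : b ∉ (adjS X a εa).1 ∪ (adjS X a εa).2 := DHelp.free_adjS hb (Ne.symm hab) εa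
      have hbfa' : b ∉ (adjS X a (!εa)).1 ∪ (adjS X a (!εa)).2 :=
        DHelp.free_adjS hb (Ne.symm hab) (!εa)
      have hA := DHelp.disj_adjS hXa hbfa εb
      have hB := DHelp.disj_adjS hXa' hbfa' (!εb)
      have c0 := DHelp.card_adjS X a εa ha
      have c0' := DHelp.card_adjS X a (!εa) ha
      have c1 := DHelp.card_adjS _ b εb hbfa
      have c1' := DHelp.card_adjS _ b (!εb) hbfa'
      have key := hbi (adjS (adjS X a εa) b εb) (adjS (adjS X a (!εa)) b (!εb)) hA hB
      rw [DHelp.meet_opp X ha hb hab εa εb, DHelp.join_opp X hX ha hb hab εa εb] at key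
      rw [htop _ hA (by omega), htop _ hB (by omega),
        hle X hX (by push_cast; omega)] at key
      linarith
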